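/- Let f : ℝ → ℝ be a Schwartz function and define u(x) = (K * f)(x) = ∫_ℝ (1/2) e^{−|x−y|} f(y) dy. Then u is twice continuously differentiable and u(x) − u''(x) = f(x) for all x ∈ ℝ; that is, convolution with K(x) = (1/2) e^{−|x|} inverts the operator 1 − ∂_x². -/

import Mathlib

open MeasureTheory SchwartzMap

/-- Convolution with the kernel `K(x) = (1/2) e^{−|x|}`:
`(K * f)(x) = ∫ (1/2) e^{−|x−y|} f(y) dy`. -/
noncomputable def KConv (f : ℝ → ℝ) : ℝ → ℝ :=
  fun x => ∫ y : ℝ, (1 / 2) * Real.exp (-|x - y|) * f y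

lemma intOnIic (g h : ℝ → ℝ) (hg : Continuous g) (hh : Integrable h)
    (hbound : ∀ t, |g t| ≤ Real.exp t * |h t|) (x : ℝ) :
    IntegrableOn g (Set.Iic x) := by
  apply Integrable.mono ((hh.norm.const_mul (Real.exp x)).restrict)
    hg.aestronglyMeasurable.restrict
  filter_upwards [ae_restrict_mem measurableSet_Iic] with t ht
  have h1 : ‖g t‖ = |g t| := rfl
  have h2 : ‖Real.exp x * ‖h t‖‖ = Real.exp x * |h t| := by
    simp [abs_mul, abs_of_pos (Real.exp_pos x), Real.norm_eq_abs, abs_abs]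
  rw [h1, h2]
  exact (hbound t).trans (by
    have := Real.exp_le_exp.mpr ht
    nlinarith [abs_nonneg (h t), Real.exp_pos t])

lemma hasDerivAt_integral_Iic (g : ℝ → ℝ) (hg : Continuous g)
    (hint : ∀ x, IntegrableOn g (Set.Iic x)) (x : ℝ) :
    HasDerivAt (fun z => ∫ t in Set.Iic z, g t) (g x) x := by
  have hfun : (fun z => ∫ t in Set.Iic z, g t)
      = fun z => (∫ t in Set.Iic 0, g t) + ∫ t in (0:ℝ)..z, g t := by
    funext z
    rw [← intervalIntegral.integral_Iic_sub_Iic (hint 0) (hint z)]; ring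
  rw [hfun]
  exact ((hg.integral_hasStrictDerivAt 0 x).hasDerivAt).const_add _

/-- For a Schwartz function `f`, the function `u = K * f` is twice
continuously differentiable and satisfies `u − u'' = f`; that is, convolution with
`K(x) = (1/2) e^{−|x|}` inverts `1 − ∂_x²`. -/
theorem stmt5 (f : 𝓢(ℝ, ℝ)) :
    ContDiff ℝ 2 (KConv (⇑f)) ∧
    ∀ x : ℝ, KConv (⇑f) x - deriv (deriv (KConv (⇑f))) x = f x := by
  -- the two half-kernels
  set g1 : ℝ → ℝ := fun t => Real.exp t * f t with hg1
  set g2 : ℝ → ℝ := fun t => Real.exp t * f (-t) with hg2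
  have hg1c : Continuous g1 := Real.continuous_exp.mul f.continuous
  have hg2c : Continuous g2 :=
    Real.continuous_exp.mul (f.continuous.comp continuous_neg)
  have hfint : Integrable (⇑f) := f.integrable
  have hfnint : Integrable (fun t => f (-t)) := hfint.comp_neg
  have hint1 : ∀ x, IntegrableOn g1 (Set.Iic x) :=
    intOnIic g1 (⇑f) hg1c hfint (fun t => by
      simp [hg1, abs_mul, abs_of_pos (Real.exp_pos t)])
  have hint2 : ∀ x, IntegrableOn g2 (Set.Iic x) :=
    intOnIic g2 (fun t => f (-t)) hg2c hfnint (fun t => by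
      simp [hg2, abs_mul, abs_of_pos (Real.exp_pos t)])
  set A : ℝ → ℝ := fun z => ∫ t in Set.Iic z, g1 t with hA
  set B : ℝ → ℝ := fun z => ∫ t in Set.Iic (-z), g2 t with hB
  have hAd : ∀ x, HasDerivAt A (g1 x) x := hasDerivAt_integral_Iic g1 hg1c hint1
  have hBd : ∀ x, HasDerivAt B (-(Real.exp (-x) * f x)) x := by
    intro x
    have h1 := (hasDerivAt_integral_Iic g2 hg2c hint2 (-x)).comp x (hasDerivAt_neg x)
    have : g2 (-x) * (-1) = -(Real.exp (-x) * f x) := by simp [hg2]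
    rw [this] at h1
    exact h1
  -- the formula for KConv
  have hform : ∀ x, KConv (⇑f) x
      = (1/2) * Real.exp (-x) * A x + (1/2) * Real.exp x * B x := by
    intro x
    have hmain : Integrable (fun y => (1/2) * Real.exp (-|x - y|) * f y) := by
      apply Integrable.mono (hfint.norm.const_mul (1/2))
        (((continuous_const.mul (Real.continuous_exp.comp
          ((continuous_const.sub continuous_id).abs.neg))).mul f.continuous).aestronglyMeasurable)
      filter_upwards with y
      have he : Real.exp (-|x - y|) ≤ 1 := Real.exp_le_one_iff.mpr (neg_nonpos.mpr (abs_nonneg _))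
      have he0 : (0:ℝ) < Real.exp (-|x - y|) := Real.exp_pos _
      simp only [Real.norm_eq_abs, abs_mul, Function.comp_apply, id_eq, abs_abs, Pi.mul_apply, Pi.neg_apply, Pi.sub_apply]
      rw [abs_of_pos he0]
      have h12 : |(1:ℝ)/2| = 1/2 := by norm_num
      rw [h12]
      nlinarith [abs_nonneg (f y)]
    have hsplit := intervalIntegral.integral_Iic_add_Ioi (b := x)
      (hmain.integrableOn) (hmain.integrableOn)
    have hL : ∫ y in Set.Iic x, (1/2) * Real.exp (-|x - y|) * f y
        = (1/2) * Real.exp (-x) * A x := by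
      rw [show (1/2 : ℝ) * Real.exp (-x) * A x
          = ∫ y in Set.Iic x, ((1/2) * Real.exp (-x)) * g1 y from
        (integral_const_mul _ _).symm]
      apply setIntegral_congr_fun measurableSet_Iic
      intro y hy
      simp only [Set.mem_Iic] at hy
      have habs : |x - y| = x - y := abs_of_nonneg (by linarith)
      show (1/2) * Real.exp (-|x - y|) * f y = (1/2) * Real.exp (-x) * g1 y
      simp only [hg1]
      rw [habs, show -(x - y) = -x + y by ring, Real.exp_add]
      ring
    have hR : ∫ y in Set.Ioi x, (1/2) * Real.exp (-|x - y|) * f y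
        = (1/2) * Real.exp x * B x := by
      have h1 : ∫ y in Set.Ioi x, (1/2) * Real.exp (-|x - y|) * f y
          = ∫ y in Set.Ioi x, ((1/2) * Real.exp x) * g2 (-y) := by
        apply setIntegral_congr_fun measurableSet_Ioi
        intro y hy
        simp only [Set.mem_Ioi] at hy
        have habs : |x - y| = y - x := by
          rw [abs_sub_comm]; exact abs_of_nonneg (by linarith)
        show (1/2) * Real.exp (-|x - y|) * f y = (1/2) * Real.exp x * g2 (-y)
        simp only [hg2, neg_neg]
        rw [habs, show -(y - x) = x + -y by ring, Real.exp_add]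
        ring
      rw [h1, integral_const_mul, integral_comp_neg_Ioi]
    calc KConv (⇑f) x = ∫ y : ℝ, (1/2) * Real.exp (-|x - y|) * f y := by
          simp [KConv]
      _ = (∫ y in Set.Iic x, (1/2) * Real.exp (-|x - y|) * f y)
          + ∫ y in Set.Ioi x, (1/2) * Real.exp (-|x - y|) * f y := hsplit.symm
      _ = _ := by rw [hL, hR]
  -- derivatives
  set u' : ℝ → ℝ := fun x => (1/2) * (Real.exp x * B x - Real.exp (-x) * A x) with hu'def
  have hexp_neg : ∀ x : ℝ, HasDerivAt (fun z => Real.exp (-z)) (-Real.exp (-x)) x := by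
    intro x
    have := (Real.hasDerivAt_exp (-x)).comp x (hasDerivAt_neg x)
    exact this.congr_deriv (by ring)
  have hud : ∀ x, HasDerivAt (KConv (⇑f)) (u' x) x := by
    intro x
    have hKeq : KConv (⇑f) = fun z => (1/2) * Real.exp (-z) * A z + (1/2) * Real.exp z * B z :=
      funext hform
    rw [hKeq]
    have h1 : HasDerivAt (fun z => (1/2) * Real.exp (-z) * A z)
        ((1/2) * (-Real.exp (-x)) * A x + (1/2) * Real.exp (-x) * g1 x) x := by
      have := (((hexp_neg x).const_mul (1/2)).mul (hAd x))
      exact this.congr_deriv (by ring)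
    have h2 : HasDerivAt (fun z => (1/2) * Real.exp z * B z)
        ((1/2) * Real.exp x * B x + (1/2) * Real.exp x * (-(Real.exp (-x) * f x))) x := by
      have := (((Real.hasDerivAt_exp x).const_mul (1/2)).mul (hBd x))
      exact this.congr_deriv (by ring)
    have := h1.add h2
    refine this.congr_deriv ?_
    rw [hu'def, hg1]
    have hee : Real.exp (-x) * (Real.exp x * f x) = f x := by
      rw [← mul_assoc, ← Real.exp_add]; simp
    have hee2 : Real.exp x * (Real.exp (-x) * f x) = f x := by
      rw [← mul_assoc, ← Real.exp_add]; simp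
    simp only
    nlinarith [hee, hee2]
  have hu'd : ∀ x, HasDerivAt u' (KConv (⇑f) x - f x) x := by
    intro x
    have h2 : HasDerivAt (fun z => Real.exp z * B z)
        (Real.exp x * B x + Real.exp x * (-(Real.exp (-x) * f x))) x :=
      (Real.hasDerivAt_exp x).mul (hBd x)
    have h1 : HasDerivAt (fun z => Real.exp (-z) * A z)
        (-Real.exp (-x) * A x + Real.exp (-x) * g1 x) x :=
      (hexp_neg x).mul (hAd x)
    have := (h2.sub h1).const_mul (1/2 : ℝ)
    refine this.congr_deriv ?_
    rw [hform x, hg1]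
    have hee : Real.exp (-x) * (Real.exp x * f x) = f x := by
      rw [← mul_assoc, ← Real.exp_add]; simp
    have hee2 : Real.exp x * (Real.exp (-x) * f x) = f x := by
      rw [← mul_assoc, ← Real.exp_add]; simp
    nlinarith [hee, hee2]
  have hderiv1 : deriv (KConv (⇑f)) = u' := funext fun x => (hud x).deriv
  have hderiv2 : deriv (deriv (KConv (⇑f))) = fun x => KConv (⇑f) x - f x := by
    rw [hderiv1]; exact funext fun x => (hu'd x).deriv
  constructor
  · rw [show (2 : WithTop ℕ∞) = 1 + 1 from rfl, contDiff_succ_iff_deriv]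
    refine ⟨fun x => (hud x).differentiableAt, by simp, ?_⟩
    rw [hderiv1, contDiff_one_iff_deriv]
    refine ⟨fun x => (hu'd x).differentiableAt, ?_⟩
    have : deriv u' = fun x => KConv (⇑f) x - f x := funext fun x => (hu'd x).deriv
    rw [this]
    have hdiffK : Differentiable ℝ (KConv (⇑f)) := fun x => (hud x).differentiableAt
    exact hdiffK.continuous.sub f.continuous
  · intro x
    rw [hderiv2]
    ring
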